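/- Let F_m denote the Fibonacci numbers (F_1 = F_2 = 1, F_{m+1} = F_m + F_{m−1}). For every m ≥ 1, the product of 2×2 integer matrices ∏_{i=1}^{m} ([[(−1)^{i−1}·2, 1],[1,0]])² applied to (1,0)ᵀ equals (F_{3m+2}, F_{3m})ᵀ. Equivalently, the continued fraction [2, 2, −2, −2, 2, 2, …, (−1)^{m−1}·2, (−1)^{m−1}·2] of length 2m equals F_{3m+2}/F_{3m}. -/

import Mathlib

open Matrix

lemma fibA (n : ℕ) : Nat.fib (n+5) + 2 * Nat.fib n = 5 * Nat.fib (n+2) := by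
  simp only [show n+5 = (n+3)+2 from rfl, show n+4 = (n+2)+2 from rfl,
    show n+3 = (n+1)+2 from rfl, Nat.fib_add_two]
  omega

lemma fibB (n : ℕ) : Nat.fib (n+3) + Nat.fib n = 2 * Nat.fib (n+2) := by
  simp only [show n+3 = (n+1)+2 from rfl, Nat.fib_add_two]
  omega

lemma fibAZ (a b c : ℕ) (h1 : a = c + 5) (h2 : b = c + 2) :
    (Nat.fib a : ℤ) = 5 * Nat.fib b - 2 * Nat.fib c := by
  subst h1 h2; have := fibA c; zify at this; linarith

lemma fibBZ (a b c : ℕ) (h1 : a = c + 3) (h2 : b = c + 2) :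
    (Nat.fib a : ℤ) = 2 * Nat.fib b - Nat.fib c := by
  subst h1 h2; have := fibB c; zify at this; linarith

lemma key (m : ℕ) :
    (List.ofFn fun i : Fin (m+1) =>
        ((!![(-1) ^ (i : ℕ) * 2, 1; 1, 0] : Matrix (Fin 2) (Fin 2) ℤ)) ^ 2).prod
      = !![(Nat.fib (3*m+5) : ℤ), (-1)^m * Nat.fib (3*m+3);
           (Nat.fib (3*m+3) : ℤ), (-1)^m * Nat.fib (3*m+1)] := by
  induction m with
  | zero =>
      norm_num [pow_two, Matrix.mul_fin_two]
  | succ k ih =>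
      rw [List.ofFn_succ']
      simp only [List.concat_eq_append, List.prod_append, List.prod_cons, List.prod_nil,
        mul_one, ih, Fin.val_last, Fin.coe_castSucc]
      have he : ((-1:ℤ))^k * ((-1:ℤ))^k = 1 := by
        rw [← pow_add]; exact (neg_one_pow_eq_one_iff_even (by norm_num)).2 ⟨k, rfl⟩
      have he2 : ((-1:ℤ))^(k*2) = 1 := by rw [mul_comm, pow_mul]; norm_num
      have he3 : ((-1:ℤ))^(k*3) = (-1)^k := by
        rw [show k*3 = k*2 + k by ring, pow_add, he2, one_mul]
      have A1 : (Nat.fib (3*(k+1)+5) : ℤ) = 5 * Nat.fib (3*k+5) - 2 * Nat.fib (3*k+3) :=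
        fibAZ _ _ _ (by ring) (by ring)
      have A2 : (Nat.fib (3*(k+1)+3) : ℤ) = 5 * Nat.fib (3*k+3) - 2 * Nat.fib (3*k+1) :=
        fibAZ _ _ _ (by ring) (by ring)
      have A3 : (Nat.fib (3*(k+1)+3) : ℤ) = 2 * Nat.fib (3*k+5) - Nat.fib (3*k+3) :=
        fibBZ _ _ _ (by ring) (by ring)
      have A4 : (Nat.fib (3*(k+1)+1) : ℤ) = 2 * Nat.fib (3*k+3) - Nat.fib (3*k+1) :=
        fibBZ _ _ _ (by ring) (by ring)
      rw [pow_two, Matrix.mul_fin_two, Matrix.mul_fin_two]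
      rcases Nat.even_or_odd k with hk | hk
      · have p1 : ((-1:ℤ))^k = 1 := hk.neg_one_pow
        have p2 : ((-1:ℤ))^(k*2) = 1 := (hk.mul_right 2).neg_one_pow
        have p3 : ((-1:ℤ))^(k*3) = 1 := (hk.mul_right 3).neg_one_pow
        ext i j : 2
        fin_cases i <;> fin_cases j <;> simp [pow_succ, p1, p2, p3] <;>
          linarith [A1, A2, A3, A4]
      · have p1 : ((-1:ℤ))^k = -1 := hk.neg_one_pow
        have p2 : ((-1:ℤ))^(k*2) = 1 := by
          rw [mul_comm, pow_mul]; norm_num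
        have p3 : ((-1:ℤ))^(k*3) = -1 := by
          rw [show k*3 = k*2 + k by ring, pow_add, p2, p1, one_mul]
        ext i j : 2
        fin_cases i <;> fin_cases j <;> simp [pow_succ, p1, p2, p3] <;>
          linarith [A1, A2, A3, A4]

theorem cf_fib_ratio_F3m2_F3m (m : ℕ) (hm : 1 ≤ m) :
    (List.ofFn fun i : Fin m =>
        ((!![(-1) ^ (i : ℕ) * 2, 1; 1, 0] : Matrix (Fin 2) (Fin 2) ℤ)) ^ 2).prod
      *ᵥ ![1, 0] = ![(Nat.fib (3 * m + 2) : ℤ), (Nat.fib (3 * m) : ℤ)] := by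
  obtain ⟨k, rfl⟩ : ∃ k, m = k + 1 := ⟨m - 1, by omega⟩
  rw [key]
  have e1 : 3 * (k+1) + 2 = 3*k+5 := by ring
  have e2 : 3 * (k+1) = 3*k+3 := by ring
  rw [e1, e2]
  ext i
  fin_cases i <;> simp [Matrix.mulVec, dotProduct]
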